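/- With the (α,β)-score function sc on finite subsets of a color set C, for any collection 𝒫 of finite subsets of C and any X, Y ⊆ C, one has sc_X(𝒫[Y]) = sc_Y(𝒫[X ∪ Y]) · (αf)^{|X| - |Y|}, where 𝒫[Y] = {P ∈ 𝒫 : Y ⊆ P}. -/
import Mathlib


open Finset

/-- The `(α,β)`-score of a color set `P` relative to `J`:
`β (αf)^{-|P \ J|}` if `J ⊆ P`, else `0`. -/
noncomputable def sc {C : Type*} [DecidableEq C] (α β : ℝ) (f : ℕ) (J P : Finset C) : ℝ :=
  if J ⊆ P then β * (α * (f : ℝ)) ^ (-(((P \ J).card : ℤ))) else 0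

/-- The score of a collection: sum of scores of its members. -/
noncomputable def scSum {C : Type*} [DecidableEq C] (α β : ℝ) (f : ℕ)
    (J : Finset C) (Ps : Finset (Finset C)) : ℝ :=
  ∑ P ∈ Ps, sc α β f J P

/-- The `J`-link of a collection: members containing `J`. -/
def link {C : Type*} [DecidableEq C] (Ps : Finset (Finset C)) (J : Finset C) :
    Finset (Finset C) :=
  Ps.filter (fun P => J ⊆ P)

/-- A park: every relative score is at most `1`. -/
def IsPark {C : Type*} [DecidableEq C] (α β : ℝ) (f : ℕ) (Ps : Finset (Finset C)) : Prop :=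
  ∀ J : Finset C, scSum α β f J Ps ≤ 1

/-- Score transition between links. -/
theorem score_transition {C : Type*} [DecidableEq C] (α β : ℝ) (f : ℕ)
    (hf : 0 < f) (hα : 1 < α) (hβ0 : 0 < β) (hβ1 : β ≤ 1)
    (Ps : Finset (Finset C)) (X Y : Finset C) :
    scSum α β f X (link Ps Y) =
      scSum α β f Y (link Ps (X ∪ Y)) * (α * (f : ℝ)) ^ ((X.card : ℤ) - (Y.card : ℤ)) := by
  classical
  have hne : (α * (f : ℝ)) ≠ 0 := by positivity
  unfold scSum link
  rw [Finset.sum_mul, Finset.sum_filter, Finset.sum_filter]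
  refine Finset.sum_congr rfl fun P hP => ?_
  by_cases hXY : X ∪ Y ⊆ P
  · have hX : X ⊆ P := subset_union_left.trans hXY
    have hY : Y ⊆ P := subset_union_right.trans hXY
    simp only [hXY, hY, if_true, sc, hX]
    rw [mul_assoc, ← zpow_add₀ hne]
    have h1 : (((P \ X).card : ℤ)) = P.card - X.card := Finset.cast_card_sdiff hX
    have h2 : (((P \ Y).card : ℤ)) = P.card - Y.card := Finset.cast_card_sdiff hY
    have he : (-(((P \ X).card : ℤ))) = -(((P \ Y).card : ℤ)) + ((X.card : ℤ) - Y.card) := by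
      omega
    rw [he]
  · simp only [hXY, if_false]
    by_cases hY : Y ⊆ P
    · have hX : ¬ X ⊆ P := fun h => hXY (Finset.union_subset h hY)
      simp [hY, sc, hX]
    · simp [hY]
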